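/- Let σ > 0, L > 0 and ρ, τ ∈ (0,1). Assume each ∇f_j is Lipschitz continuous with constant L, each B_j satisfies B_j ⪰ σI, and d ≠ 0 is the minimizer of Q(x,·) with optimal value θ = Q(x,d) < 0. Let C_1,…,C_m satisfy C_j ≥ F_j(x) for all j. Suppose α ∈ (0,1] satisfies F_j(x + α d) ≤ C_j + τ α θ for all j, while the condition fails at α/ρ ∈ (0,1], i.e., there exists j with F_j(x + (α/ρ) d) > C_j + τ (α/ρ) θ. Then α ≥ 2ρ(1−τ)|θ|/(L‖d‖²), and consequently F_j(x + α d) ≤ C_j − (σ τ ρ (1−τ)/L)|θ| for every j. -/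

import Mathlib

open Filter Topology
open scoped RealInnerProductSpace BigOperators

noncomputable section

namespace NPQN

variable {n m : ℕ}

/-- The quadratic form `⟨d, B d⟩` of a matrix `B` acting on Euclidean space. -/
def mquad (B : Matrix (Fin n) (Fin n) ℝ) (d : EuclideanSpace ℝ (Fin n)) : ℝ :=
  ⟪d, Matrix.toEuclideanLin B d⟫

/-- `B ⪰ σ I`, i.e. `⟨d, B d⟩ ≥ σ‖d‖²` for all `d`. -/
def MatGE (B : Matrix (Fin n) (Fin n) ℝ) (σ : ℝ) : Prop :=
  ∀ d : EuclideanSpace ℝ (Fin n), σ * ‖d‖ ^ 2 ≤ mquad B d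

/-- `Q_j(x,d) = ⟨∇f_j(x), d⟩ + (1/2)⟨d, B_j d⟩ + g_j(x+d) − g_j(x)`. -/
def Qj (f g : Fin m → EuclideanSpace ℝ (Fin n) → ℝ)
    (B : Fin m → Matrix (Fin n) (Fin n) ℝ) (x d : EuclideanSpace ℝ (Fin n)) (j : Fin m) : ℝ :=
  ⟪gradient (f j) x, d⟫ + (1 / 2) * mquad (B j) d + g j (x + d) - g j x

/-- `Q(x,d) = max_j Q_j(x,d)`. -/
def Qmax (f g : Fin m → EuclideanSpace ℝ (Fin n) → ℝ)
    (B : Fin m → Matrix (Fin n) (Fin n) ℝ) (x d : EuclideanSpace ℝ (Fin n)) : ℝ :=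
  ⨆ j, Qj f g B x d j

/-- `θ(x) = inf_d Q(x,d)`. -/
def theta (f g : Fin m → EuclideanSpace ℝ (Fin n) → ℝ)
    (B : Fin m → Matrix (Fin n) (Fin n) ℝ) (x : EuclideanSpace ℝ (Fin n)) : ℝ :=
  ⨅ d, Qmax f g B x d

/-- One-sided directional derivative. -/
def HasDirDeriv (F : EuclideanSpace ℝ (Fin n) → ℝ) (x d : EuclideanSpace ℝ (Fin n)) (c : ℝ) : Prop :=
  Tendsto (fun t : ℝ => (F (x + t • d) - F x) / t) (𝓝[>] (0 : ℝ)) (𝓝 c)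

/-- `x` is a critical point of `F = (F_1,…,F_m)`. -/
def IsCriticalPt (F : Fin m → EuclideanSpace ℝ (Fin n) → ℝ) (x : EuclideanSpace ℝ (Fin n)) : Prop :=
  ¬ ∃ d : EuclideanSpace ℝ (Fin n), ∀ j, ∃ c : ℝ, HasDirDeriv (F j) x d c ∧ c < 0

/-- `ξ` is a subgradient of `g` at `y`. -/
def IsSubgradAt (g : EuclideanSpace ℝ (Fin n) → ℝ) (y ξ : EuclideanSpace ℝ (Fin n)) : Prop :=
  ∀ z, g y + ⟪ξ, z - y⟫ ≤ g z

/-- Hessian of `f` as the derivative of the gradient. -/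
def hess (f : EuclideanSpace ℝ (Fin n) → ℝ) (z : EuclideanSpace ℝ (Fin n)) :
    EuclideanSpace ℝ (Fin n) →L[ℝ] EuclideanSpace ℝ (Fin n) :=
  fderiv ℝ (fun y => gradient f y) z


/-- Descent lemma: for a `C¹` function with `L`-Lipschitz gradient,
`f(x+v) ≤ f(x) + ⟪∇f(x), v⟫ + (L/2)‖v‖²`. -/
theorem descent_lemma {E : Type*} [NormedAddCommGroup E] [InnerProductSpace ℝ E]
    [CompleteSpace E] (f : E → ℝ) (hf : ContDiff ℝ 1 f) (L : ℝ) (hL : 0 ≤ L)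
    (hLip : LipschitzWith L.toNNReal (fun y => gradient f y)) (x v : E) :
    f (x + v) ≤ f x + ⟪gradient f x, v⟫ + L / 2 * ‖v‖ ^ 2 := by
  have hline : ∀ t : ℝ, HasDerivAt (fun s : ℝ => f (x + s • v)) ⟪gradient f (x + t • v), v⟫ t := by
    intro t
    have hγ : HasDerivAt (fun s : ℝ => x + s • v) v t := by
      simpa using ((hasDerivAt_id t).smul_const v).const_add x
    have hd := ((hf.differentiable one_ne_zero) (x + t • v)).hasGradientAt
    exact (by have h := hd.hasFDerivAt.comp_hasDerivAt t hγ; simp only [InnerProductSpace.toDual_apply_apply] at h; exact h)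
  set ψ : ℝ → ℝ := fun t => f (x + t • v) - t * ⟪gradient f x, v⟫ - L / 2 * t ^ 2 * ‖v‖ ^ 2 with hψ
  have hψd : ∀ t : ℝ, HasDerivAt ψ
      (⟪gradient f (x + t • v), v⟫ - ⟪gradient f x, v⟫ - L * t * ‖v‖ ^ 2) t := by
    intro t
    have h1 : HasDerivAt (fun s : ℝ => s * ⟪gradient f x, v⟫) ⟪gradient f x, v⟫ t := by
      simpa using (hasDerivAt_id t).mul_const ⟪gradient f x, v⟫
    have h2 : HasDerivAt (fun s : ℝ => L / 2 * s ^ 2 * ‖v‖ ^ 2) (L * t * ‖v‖ ^ 2) t := by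
      have := ((hasDerivAt_pow 2 t).const_mul (L / 2)).mul_const (‖v‖ ^ 2)
      exact this.congr_deriv (by rw [show (2:ℕ) - 1 = 1 from rfl]; push_cast; ring)
    exact ((hline t).sub h1).sub h2
  have hdiff : Differentiable ℝ ψ := fun t => (hψd t).differentiableAt
  have hanti : AntitoneOn ψ (Set.Icc 0 1) := by
    apply antitoneOn_of_deriv_nonpos (convex_Icc 0 1) hdiff.continuous.continuousOn
      (fun t _ => (hdiff t).differentiableWithinAt)
    intro t ht
    rw [interior_Icc] at ht
    rw [(hψd t).deriv]
    have hcs : ⟪gradient f (x + t • v) - gradient f x, v⟫ ≤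
        ‖gradient f (x + t • v) - gradient f x‖ * ‖v‖ := real_inner_le_norm _ _
    have hlb : ‖gradient f (x + t • v) - gradient f x‖ ≤ L * (t * ‖v‖) := by
      have h := hLip.dist_le_mul (x + t • v) x
      rw [dist_eq_norm, dist_eq_norm] at h
      have hxx : x + t • v - x = t • v := by abel
      rw [hxx, norm_smul, Real.norm_eq_abs, abs_of_pos ht.1, Real.coe_toNNReal L hL] at h
      linarith
    have hsub : ⟪gradient f (x + t • v), v⟫ - ⟪gradient f x, v⟫ =
        ⟪gradient f (x + t • v) - gradient f x, v⟫ := (inner_sub_left _ _ _).symm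
    rw [hsub]
    nlinarith [norm_nonneg v]
  have := hanti (Set.left_mem_Icc.2 zero_le_one) (Set.right_mem_Icc.2 zero_le_one) zero_le_one
  simp only [hψ, zero_smul, add_zero, one_smul, one_pow] at this
  nlinarith [this]

/-- `mquad` scales quadratically. -/
theorem mquad_smul (B : Matrix (Fin n) (Fin n) ℝ) (t : ℝ) (d : EuclideanSpace ℝ (Fin n)) :
    mquad B (t • d) = t ^ 2 * mquad B d := by
  unfold mquad
  rw [map_smul, real_inner_smul_left, real_inner_smul_right]
  ring


private theorem arith_seg (t θ G M gx gxd gtd s : ℝ) (ht0 : 0 ≤ t) (hts : 0 ≤ t - t ^ 2)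
    (hg : gtd ≤ (1 - t) * gx + t * gxd) (hQ : G + 1 / 2 * M + gxd - gx ≤ θ) (hBj : s ≤ M) :
    t * G + 1 / 2 * (t ^ 2 * M) + gtd - gx ≤ t * θ + (t ^ 2 - t) / 2 * s := by
  nlinarith [mul_le_mul_of_nonneg_left hQ ht0,
    mul_le_mul_of_nonneg_left hBj (by linarith : (0:ℝ) ≤ (t - t ^ 2) / 2)]

private theorem arith_key (t θ G M gx gxd gtd ftd fx s D L : ℝ) (ht0 : 0 ≤ t)
    (hdes : ftd ≤ fx + t * G + L / 2 * (t ^ 2 * D))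
    (hg : gtd ≤ (1 - t) * gx + t * gxd)
    (hQ : G + 1 / 2 * M + gxd - gx ≤ θ) (hBj : s ≤ M) :
    ftd + gtd ≤ fx + gx + t * θ - t / 2 * s + L / 2 * t ^ 2 * D := by
  nlinarith [mul_le_mul_of_nonneg_left hQ ht0, mul_le_mul_of_nonneg_left hBj ht0]

set_option maxHeartbeats 1000000 in
/-- Step-length lower bound and sufficient decrease: if the nonmonotone
condition holds at `α ∈ (0,1]` but fails at `α/ρ ∈ (0,1]`, then
`α ≥ 2ρ(1−τ)|θ|/(L‖d‖²)`, and consequently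
`F_j(x + α d) ≤ C_j − (στρ(1−τ)/L)|θ|` for every `j`. -/
theorem stepsize_lower_bound_and_decrease
    (n m : ℕ) (hn : 1 ≤ n) (hm : 1 ≤ m)
    (f g : Fin m → EuclideanSpace ℝ (Fin n) → ℝ)
    (hfconv : ∀ j, ConvexOn ℝ Set.univ (f j))
    (hfdiff : ∀ j, ContDiff ℝ 1 (f j))
    (hgconv : ∀ j, ConvexOn ℝ Set.univ (g j))
    (hgcont : ∀ j, Continuous (g j))
    (σ L ρ τ : ℝ) (hσ : 0 < σ) (hL : 0 < L)
    (hρ : ρ ∈ Set.Ioo (0 : ℝ) 1) (hτ : τ ∈ Set.Ioo (0 : ℝ) 1)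
    (hLip : ∀ j, LipschitzWith L.toNNReal (fun y => gradient (f j) y))
    (B : Fin m → Matrix (Fin n) (Fin n) ℝ)
    (hBsymm : ∀ j, (B j).IsSymm)
    (hB : ∀ j, MatGE (B j) σ)
    (x d : EuclideanSpace ℝ (Fin n)) (hdne : d ≠ 0)
    (hdmin : ∀ e, Qmax f g B x d ≤ Qmax f g B x e)
    (θ : ℝ) (hθ : θ = Qmax f g B x d) (hθneg : θ < 0)
    (C : Fin m → ℝ) (hC : ∀ j, f j x + g j x ≤ C j)
    (α : ℝ) (hα : α ∈ Set.Ioc (0 : ℝ) 1)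
    (hok : ∀ j, f j (x + α • d) + g j (x + α • d) ≤ C j + τ * α * θ)
    (hαρ : α / ρ ∈ Set.Ioc (0 : ℝ) 1)
    (hfail : ∃ j, C j + τ * (α / ρ) * θ < f j (x + (α / ρ) • d) + g j (x + (α / ρ) • d)) :
    2 * ρ * (1 - τ) * |θ| / (L * ‖d‖ ^ 2) ≤ α ∧
    ∀ j, f j (x + α • d) + g j (x + α • d) ≤ C j - σ * τ * ρ * (1 - τ) / L * |θ| := by
  obtain ⟨hρ0, hρ1⟩ := hρ
  obtain ⟨hτ0, hτ1⟩ := hτ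
  obtain ⟨hα0, hα1⟩ := hα
  obtain ⟨hβ0, hβ1⟩ := hαρ
  have hdpos : (0:ℝ) < ‖d‖ := norm_pos_iff.2 hdne
  have hd2 : (0:ℝ) < ‖d‖ ^ 2 := by positivity
  have : Nonempty (Fin m) := ⟨⟨0, hm⟩⟩
  have habs : |θ| = -θ := abs_of_neg hθneg
  have hQle : ∀ (e : EuclideanSpace ℝ (Fin n)) (j : Fin m), Qj f g B x e j ≤ Qmax f g B x e :=
    fun e j => le_ciSup (Set.finite_range _).bddAbove j
  -- convexity bound for g along the segment
  have hgc : ∀ (j : Fin m), ∀ t : ℝ, 0 ≤ t → t ≤ 1 →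
      g j (x + t • d) ≤ (1 - t) * g j x + t * g j (x + d) := by
    intro j t ht0 ht1
    have := (hgconv j).2 (Set.mem_univ x) (Set.mem_univ (x + d))
      (by linarith : (0:ℝ) ≤ 1 - t) ht0 (by ring)
    have harg : (1 - t) • x + t • (x + d) = x + t • d := by
      rw [smul_add, sub_smul, one_smul]; abel
    rwa [harg] at this
  -- master bound for F along the segment
  have key : ∀ t : ℝ, 0 < t → t ≤ 1 → ∀ j : Fin m,
      f j (x + t • d) + g j (x + t • d) ≤
        f j x + g j x + t * θ - t / 2 * (σ * ‖d‖ ^ 2) + L / 2 * t ^ 2 * ‖d‖ ^ 2 := by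
    intro t ht0 ht1 j
    have hdes := descent_lemma (f j) (hfdiff j) L hL.le (hLip j) x (t • d)
    rw [real_inner_smul_right, norm_smul, Real.norm_eq_abs, abs_of_pos ht0, mul_pow] at hdes
    have hg := hgc j t ht0.le ht1
    have hQ : Qj f g B x d j ≤ θ := hθ ▸ hQle d j
    have hBj := hB j d
    have hQdef : Qj f g B x d j =
        ⟪gradient (f j) x, d⟫ + 1 / 2 * mquad (B j) d + g j (x + d) - g j x := rfl
    rw [hQdef] at hQ
    exact arith_key t θ _ _ _ _ _ _ _ _ _ L ht0.le (by linarith [hdes]) hg hQ hBj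
  -- the step-size lower bound
  have hρβ : ρ * (α / ρ) = α := by field_simp
  have hstep : (1 - τ) * (-θ) ≤ L / 2 * (α / ρ) * ‖d‖ ^ 2 := by
    obtain ⟨j, hj⟩ := hfail
    have hk := key (α / ρ) hβ0 hβ1 j
    have hCj := hC j
    have h3 : ((1 - τ) * (-θ)) * (α / ρ) ≤ (L / 2 * (α / ρ) * ‖d‖ ^ 2) * (α / ρ) := by
      nlinarith [mul_pos hσ hd2, hβ0]
    exact le_of_mul_le_mul_right h3 hβ0
  have part1m : 2 * ρ * (1 - τ) * (-θ) ≤ α * (L * ‖d‖ ^ 2) := by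
    have h5 := mul_le_mul_of_nonneg_left hstep hρ0.le
    have hx : ρ * (L / 2 * (α / ρ) * ‖d‖ ^ 2) = L / 2 * α * ‖d‖ ^ 2 := by
      field_simp
    rw [hx] at h5
    nlinarith [h5]
  have part1 : 2 * ρ * (1 - τ) * |θ| / (L * ‖d‖ ^ 2) ≤ α := by
    rw [habs, div_le_iff₀ (by positivity)]
    exact part1m
  -- |θ| ≥ σ‖d‖²/2 via the minimality of d
  have hθt : ∀ t : ℝ, 0 < t → t < 1 → θ ≤ -t * (σ * ‖d‖ ^ 2) / 2 := by
    intro t ht0 ht1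
    have hsup : Qmax f g B x (t • d) ≤ t * θ + (t ^ 2 - t) / 2 * (σ * ‖d‖ ^ 2) := by
      apply ciSup_le
      intro j
      have hQdef : Qj f g B x (t • d) j =
          ⟪gradient (f j) x, t • d⟫ + 1 / 2 * mquad (B j) (t • d) + g j (x + t • d) - g j x := rfl
      rw [hQdef, real_inner_smul_right, mquad_smul]
      have hg := hgc j t ht0.le ht1.le
      have hQ : Qj f g B x d j ≤ θ := hθ ▸ hQle d j
      have hQdef2 : Qj f g B x d j =
          ⟪gradient (f j) x, d⟫ + 1 / 2 * mquad (B j) d + g j (x + d) - g j x := rfl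
      rw [hQdef2] at hQ
      exact arith_seg t θ _ _ _ _ _ _ ht0.le (by nlinarith) hg hQ (hB j d)
    have hmin : θ ≤ Qmax f g B x (t • d) := hθ ▸ hdmin (t • d)
    have hc := hmin.trans hsup
    have h2 : (1 - t) * θ ≤ (1 - t) * (-t * (σ * ‖d‖ ^ 2) / 2) := by nlinarith [hc]
    exact (mul_le_mul_iff_right₀ (by linarith : (0:ℝ) < 1 - t)).1 h2
  have hθσ : σ * ‖d‖ ^ 2 / 2 ≤ -θ := by
    have : θ ≤ -(σ * ‖d‖ ^ 2 / 2) := by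
      apply le_of_forall_pos_le_add
      intro ε hε
      set s : ℝ := σ * ‖d‖ ^ 2 with hs
      have hspos : 0 < s := by positivity
      set t : ℝ := max (1/2) (1 - 2 * ε / s) with htdef
      have ht0 : 0 < t := lt_of_lt_of_le (by norm_num) (le_max_left _ _)
      have ht1 : t < 1 := by
        apply max_lt (by norm_num)
        have : 0 < 2 * ε / s := by positivity
        linarith
      have hb := hθt t ht0 ht1
      have htge : 1 - 2 * ε / s ≤ t := le_max_right _ _
      have hcanc : 2 * ε / s * s = 2 * ε := div_mul_cancel₀ _ (ne_of_gt hspos)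
      nlinarith [mul_le_mul_of_nonneg_right htge hspos.le]
    linarith
  refine ⟨part1, fun j => ?_⟩
  have hLα : σ * ρ * (1 - τ) ≤ L * α := by
    have h4 : (σ * ρ * (1 - τ)) * ‖d‖ ^ 2 ≤ (L * α) * ‖d‖ ^ 2 := by
      nlinarith [mul_le_mul_of_nonneg_left hθσ (by nlinarith : (0:ℝ) ≤ 2 * ρ * (1 - τ))]
    exact le_of_mul_le_mul_right h4 hd2
  have h6 : σ * τ * ρ * (1 - τ) / L * |θ| ≤ τ * α * (-θ) := by
    rw [habs, div_mul_eq_mul_div, div_le_iff₀ hL]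
    nlinarith [mul_le_mul_of_nonneg_left hLα (mul_nonneg hτ0.le (by linarith : (0:ℝ) ≤ -θ))]
  linarith [hok j, h6]


end NPQN
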